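/- Let Σ = F_4 in ℝ^4 with simple roots α_1 = e_2 − e_3, α_2 = e_3 − e_4, α_3 = e_4, α_4 = ½(e_1 − e_2 − e_3 − e_4), and let Θ = {α_1, α_2}. Then the nonzero orthogonal projections of the roots of F_4 onto (span Θ)^⊥ contain a root system of type G_2, whose base consists of the projections of α_3 and α_4. -/

import Mathlib

open scoped RealInnerProductSpace

namespace Stmt15Aux

def S : Finset (ℤ × ℤ) :=
  {(1,0),(0,1),(1,1),(2,1),(3,1),(3,2),(-1,0),(0,-1),(-1,-1),(-2,-1),(-3,-1),(-3,-2)}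

def ip (p q : ℤ × ℤ) : ℤ := 2*p.1*q.1 - 3*(p.1*q.2 + p.2*q.1) + 6*p.2*q.2

def td (p q : ℤ × ℤ) : ℤ := 2 * ip q p / ip p p

lemma closure_dec : ∀ p ∈ S, ∀ q ∈ S, td p q * ip p p = 2 * ip q p ∧
    (q.1 - td p q * p.1, q.2 - td p q * p.2) ∈ S := by decide

lemma ip_ne : ∀ p ∈ S, ip p p ≠ 0 := by decide

lemma sign_dec : ∀ p ∈ S, (0 ≤ p.1 ∧ 0 ≤ p.2) ∨ (p.1 ≤ 0 ∧ p.2 ≤ 0) := by decide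

lemma card_S : S.card = 12 := by decide

lemma zero_not_mem_S : ((0,0) : ℤ × ℤ) ∉ S := by decide

variable {E : Type*} [NormedAddCommGroup E] [InnerProductSpace ℝ E]

noncomputable def g (a b : E) (q : ℤ × ℤ) : E := (q.1 : ℝ) • a + (q.2 : ℝ) • b

lemma inner_g (a b : E) (haa : ⟪a,a⟫ = 1/3) (hab : ⟪a,b⟫ = -(1/2)) (hbb : ⟪b,b⟫ = 1)
    (p q : ℤ × ℤ) : ⟪g a b p, g a b q⟫ = (ip p q : ℝ) / 6 := by
  simp only [g, inner_add_left, inner_add_right, real_inner_smul_left, real_inner_smul_right]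
  have hba : ⟪b,a⟫ = -(1/2) := by rw [real_inner_comm]; exact hab
  rw [haa, hba, hbb, hab]
  simp only [ip]
  push_cast
  ring

lemma g_inj (a b : E) (haa : ⟪a,a⟫ = 1/3) (hab : ⟪a,b⟫ = -(1/2)) (hbb : ⟪b,b⟫ = 1)
    (p q : ℤ × ℤ) (h : g a b p = g a b q) : p = q := by
  have h1 : ⟪g a b (1,0), g a b p⟫ = ⟪g a b (1,0), g a b q⟫ := by rw [h]
  have h2 : ⟪g a b (0,1), g a b p⟫ = ⟪g a b (0,1), g a b q⟫ := by rw [h]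
  rw [inner_g a b haa hab hbb, inner_g a b haa hab hbb] at h1 h2
  have h1' : ip (1,0) p = ip (1,0) q := by
    have : (ip (1,0) p : ℝ) = ip (1,0) q := by linarith
    exact_mod_cast this
  have h2' : ip (0,1) p = ip (0,1) q := by
    have : (ip (0,1) p : ℝ) = ip (0,1) q := by linarith
    exact_mod_cast this
  simp only [ip] at h1' h2'
  have : p.1 = q.1 ∧ p.2 = q.2 := by constructor <;> omega
  exact Prod.ext this.1 this.2

end Stmt15Aux

open Stmt15Aux

/-- For F₄ in ℝ⁴ with Θ = {α₁, α₂}, the nonzero orthogonal projections of the roots of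
F₄ onto (span Θ)^⊥ contain a root system of type G₂ whose base consists of the
projections a, b of α₃ and α₄. -/
theorem stmt15 :
    ∀ (e : Fin 4 → EuclideanSpace ℝ (Fin 4)), (∀ i, e i = EuclideanSpace.single i 1) →
    ∀ (F4 : Set (EuclideanSpace ℝ (Fin 4))),
    F4 = {x | (∃ i, x = e i ∨ x = -e i) ∨
      (∃ i j, i < j ∧ (x = e i + e j ∨ x = e i - e j ∨ x = -e i + e j ∨ x = -e i - e j)) ∨
      (∃ ε : Fin 4 → ℤ, (∀ i, ε i = 1 ∨ ε i = -1) ∧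
        x = (1 / 2 : ℝ) • ∑ i, (ε i : ℝ) • e i)} →
    ∀ (p : EuclideanSpace ℝ (Fin 4) → EuclideanSpace ℝ (Fin 4)),
    (∀ x, p x = (Submodule.orthogonalProjectionOnto
      ((Submodule.span ℝ {e 1 - e 2, e 2 - e 3})ᗮ) x : EuclideanSpace ℝ (Fin 4))) →
    ∀ a b, a = p (e 3) → b = p ((1 / 2 : ℝ) • (e 0 - e 1 - e 2 - e 3)) →
    ∃ G : Set (EuclideanSpace ℝ (Fin 4)), G ⊆ p '' F4 ∧ (0 : EuclideanSpace ℝ (Fin 4)) ∉ G ∧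
      G.ncard = 12 ∧ a ∈ G ∧ b ∈ G ∧
      ‖b‖ ^ 2 = 3 * ‖a‖ ^ 2 ∧ 2 * ⟪a, b⟫ / ⟪a, a⟫ = -3 ∧ 2 * ⟪a, b⟫ / ⟪b, b⟫ = -1 ∧
      (∀ x ∈ G, ∀ y ∈ G, y - (2 * ⟪y, x⟫ / ⟪x, x⟫) • x ∈ G) ∧
      (∀ x ∈ G, ∃ c d : ℤ, ((0 ≤ c ∧ 0 ≤ d) ∨ (c ≤ 0 ∧ d ≤ 0)) ∧
        x = (c : ℝ) • a + (d : ℝ) • b) := by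
  intro e he F4 hF4 p hp a b ha hb
  subst hF4
  set T : Submodule ℝ (EuclideanSpace ℝ (Fin 4)) :=
    Submodule.span ℝ {e 1 - e 2, e 2 - e 3} with hT
  -- orthonormality of e
  have horth : ∀ i j : Fin 4, ⟪e i, e j⟫ = if i = j then (1:ℝ) else 0 := by
    intro i j
    rw [he i, he j, EuclideanSpace.inner_single_left, EuclideanSpace.single_apply]
    simp [eq_comm]
  -- linearity facts about p
  have hpadd : ∀ x y, p (x + y) = p x + p y := by
    intro x y; rw [hp, hp, hp, map_add]; rfl
  have hpsmul : ∀ (c : ℝ) x, p (c • x) = c • p x := by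
    intro c x; rw [hp, hp, map_smul]; rfl
  have hpT : ∀ x ∈ T, p x = 0 := by
    intro x hx
    rw [hp, Submodule.orthogonalProjectionOnto_apply_of_mem_orthogonal
      (T.le_orthogonal_orthogonal hx)]
    rfl
  have hpdiff : ∀ x y, x - y ∈ T → p x = p y := by
    intro x y hxy
    have h : p x = p (y + (x - y)) := by rw [add_sub_cancel]
    rw [h, hpadd, hpT _ hxy, add_zero]
  have hTelt : ∀ z : EuclideanSpace ℝ (Fin 4), ∀ s t : ℝ,
      s • (e 1 - e 2) + t • (e 2 - e 3) = z → z ∈ T := by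
    intro z s t hz
    rw [hT, Submodule.mem_span_pair]
    exact ⟨s, t, hz⟩
  have hmemK : ∀ v, ⟪e 1 - e 2, v⟫ = 0 → ⟪e 2 - e 3, v⟫ = 0 → v ∈ Tᗮ := by
    intro v h1 h2
    rw [Submodule.mem_orthogonal]
    intro u hu
    rw [hT, Submodule.mem_span_pair] at hu
    obtain ⟨s, t, rfl⟩ := hu
    rw [inner_add_left, real_inner_smul_left, real_inner_smul_left, h1, h2]
    ring
  have hself : ∀ v ∈ Tᗮ, p v = v := by
    intro v hv
    rw [hp]; exact Submodule.starProjection_eq_self_iff.mpr hv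
  -- the vectors w and A
  set w : EuclideanSpace ℝ (Fin 4) := (1 / 2 : ℝ) • (e 0 - e 1 - e 2 - e 3) with hw
  set A : EuclideanSpace ℝ (Fin 4) := (1 / 3 : ℝ) • (e 1 + e 2 + e 3) with hA
  have hAK : A ∈ Tᗮ := by
    apply hmemK <;>
    · simp only [hA, inner_sub_left, real_inner_smul_right, inner_add_right, horth]
      simp
  have hwK : w ∈ Tᗮ := by
    apply hmemK <;>
    · simp only [hw, inner_sub_left, real_inner_smul_right, inner_sub_right, horth]
      simp
  have haA : a = A := by
    rw [ha, hpdiff (e 3) A (hTelt _ (-(1/3)) (-(2/3)) (by rw [hA]; module)), hself A hAK]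
  have hbw : b = w := by
    rw [hb, hself w hwK]
  -- inner product values
  have haa : ⟪a, a⟫ = 1/3 := by
    rw [haA, hA]
    simp only [real_inner_smul_left, real_inner_smul_right, inner_add_left, inner_add_right, horth]
    simp
    norm_num
  have hab : ⟪a, b⟫ = -(1/2) := by
    rw [haA, hbw, hA, hw]
    simp only [real_inner_smul_left, real_inner_smul_right, inner_add_left, inner_sub_right, horth]
    simp
    norm_num
  have hbb : ⟪b, b⟫ = 1 := by
    rw [hbw, hw]
    simp only [real_inner_smul_left, real_inner_smul_right, inner_sub_left, inner_sub_right, horth]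
    simp
    norm_num
  -- the set G
  refine ⟨g a b '' ↑S, ?_, ?_, ?_, ?_, ?_, ?_, ?_, ?_, ?_, ?_⟩
  · -- G ⊆ p '' F4
    rintro x ⟨q, hq, rfl⟩
    replace hq : q ∈ S := hq
    have hcomb : ∀ c d : ℤ, p ((c : ℝ) • e 3 + (d : ℝ) • w) = g a b (c, d) := by
      intro c d
      rw [hpadd, hpsmul, hpsmul, ← ha, ← hb]; rfl
    have key : ∀ q ∈ S, ∃ r ∈ (setOf fun x => (∃ i, x = e i ∨ x = -e i) ∨
        (∃ i j, i < j ∧ (x = e i + e j ∨ x = e i - e j ∨ x = -e i + e j ∨ x = -e i - e j)) ∨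
        (∃ ε : Fin 4 → ℤ, (∀ i, ε i = 1 ∨ ε i = -1) ∧
          x = (1 / 2 : ℝ) • ∑ i, (ε i : ℝ) • e i)), p r = g a b q := by
      intro q hq
      fin_cases hq
      · refine ⟨e 3, Or.inl ⟨3, Or.inl rfl⟩, ?_⟩
        have h := hcomb 1 0; simpa using h
      · refine ⟨w, Or.inr (Or.inr ⟨![1,-1,-1,-1], by decide, ?_⟩), ?_⟩
        · rw [hw, Fin.sum_univ_four]
          simp only [Matrix.cons_val_zero, Matrix.cons_val_one, Matrix.head_cons,
            Matrix.cons_val_two, Matrix.tail_cons, Matrix.cons_val_three]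
          push_cast
          module
        · have h := hcomb 0 1; simpa using h
      · refine ⟨e 3 + w, Or.inr (Or.inr ⟨![1,-1,-1,1], by decide, ?_⟩), ?_⟩
        · rw [hw, Fin.sum_univ_four]
          simp only [Matrix.cons_val_zero, Matrix.cons_val_one, Matrix.head_cons,
            Matrix.cons_val_two, Matrix.tail_cons, Matrix.cons_val_three]
          push_cast
          module
        · rw [hpdiff (e 3 + w) ((1:ℝ) • e 3 + (1:ℝ) • w) (hTelt _ 0 0 (by module))]
          have h := hcomb 1 1; simpa using h
      · refine ⟨(1/2 : ℝ) • (e 0 + e 1 + e 2 - e 3),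
          Or.inr (Or.inr ⟨![1,1,1,-1], by decide, ?_⟩), ?_⟩
        · rw [Fin.sum_univ_four]
          simp only [Matrix.cons_val_zero, Matrix.cons_val_one, Matrix.head_cons,
            Matrix.cons_val_two, Matrix.tail_cons, Matrix.cons_val_three]
          push_cast
          module
        · rw [hpdiff _ ((2:ℝ) • e 3 + (1:ℝ) • w) (hTelt _ 1 2 (by rw [hw]; module))]
          have h := hcomb 2 1; simpa using h
      · refine ⟨(1/2 : ℝ) • (e 0 + e 1 + e 2 + e 3),
          Or.inr (Or.inr ⟨![1,1,1,1], by decide, ?_⟩), ?_⟩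
        · rw [Fin.sum_univ_four]
          simp only [Matrix.cons_val_zero, Matrix.cons_val_one, Matrix.head_cons,
            Matrix.cons_val_two, Matrix.tail_cons, Matrix.cons_val_three]
          push_cast
          module
        · rw [hpdiff _ ((3:ℝ) • e 3 + (1:ℝ) • w) (hTelt _ 1 2 (by rw [hw]; module))]
          have h := hcomb 3 1; simpa using h
      · refine ⟨e 0, Or.inl ⟨0, Or.inl rfl⟩, ?_⟩
        rw [hpdiff _ ((3:ℝ) • e 3 + (2:ℝ) • w) (hTelt _ 1 2 (by rw [hw]; module))]
        have h := hcomb 3 2; simpa using h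
      · refine ⟨-(e 3), Or.inl ⟨3, Or.inr rfl⟩, ?_⟩
        rw [hpdiff _ ((-1:ℝ) • e 3 + (0:ℝ) • w) (hTelt _ 0 0 (by module))]
        have h := hcomb (-1) 0; simpa using h
      · refine ⟨-w, Or.inr (Or.inr ⟨![-1,1,1,1], by decide, ?_⟩), ?_⟩
        · rw [hw, Fin.sum_univ_four]
          simp only [Matrix.cons_val_zero, Matrix.cons_val_one, Matrix.head_cons,
            Matrix.cons_val_two, Matrix.tail_cons, Matrix.cons_val_three]
          push_cast
          module
        · rw [hpdiff _ ((0:ℝ) • e 3 + (-1:ℝ) • w) (hTelt _ 0 0 (by module))]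
          have h := hcomb 0 (-1); simpa using h
      · refine ⟨-(e 3 + w), Or.inr (Or.inr ⟨![-1,1,1,-1], by decide, ?_⟩), ?_⟩
        · rw [hw, Fin.sum_univ_four]
          simp only [Matrix.cons_val_zero, Matrix.cons_val_one, Matrix.head_cons,
            Matrix.cons_val_two, Matrix.tail_cons, Matrix.cons_val_three]
          push_cast
          module
        · rw [hpdiff _ ((-1:ℝ) • e 3 + (-1:ℝ) • w) (hTelt _ 0 0 (by module))]
          have h := hcomb (-1) (-1); simpa using h
      · refine ⟨-((1/2 : ℝ) • (e 0 + e 1 + e 2 - e 3)),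
          Or.inr (Or.inr ⟨![-1,-1,-1,1], by decide, ?_⟩), ?_⟩
        · rw [Fin.sum_univ_four]
          simp only [Matrix.cons_val_zero, Matrix.cons_val_one, Matrix.head_cons,
            Matrix.cons_val_two, Matrix.tail_cons, Matrix.cons_val_three]
          push_cast
          module
        · rw [hpdiff _ ((-2:ℝ) • e 3 + (-1:ℝ) • w) (hTelt _ (-1) (-2) (by rw [hw]; module))]
          have h := hcomb (-2) (-1); simpa using h
      · refine ⟨-((1/2 : ℝ) • (e 0 + e 1 + e 2 + e 3)),
          Or.inr (Or.inr ⟨![-1,-1,-1,-1], by decide, ?_⟩), ?_⟩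
        · rw [Fin.sum_univ_four]
          simp only [Matrix.cons_val_zero, Matrix.cons_val_one, Matrix.head_cons,
            Matrix.cons_val_two, Matrix.tail_cons, Matrix.cons_val_three]
          push_cast
          module
        · rw [hpdiff _ ((-3:ℝ) • e 3 + (-1:ℝ) • w) (hTelt _ (-1) (-2) (by rw [hw]; module))]
          have h := hcomb (-3) (-1); simpa using h
      · refine ⟨-(e 0), Or.inl ⟨0, Or.inr rfl⟩, ?_⟩
        rw [hpdiff _ ((-3:ℝ) • e 3 + (-2:ℝ) • w) (hTelt _ (-1) (-2) (by rw [hw]; module))]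
        have h := hcomb (-3) (-2); simpa using h
    obtain ⟨r, hr, hpr⟩ := key q hq
    exact ⟨r, hr, hpr⟩
  · -- 0 ∉ G
    rintro ⟨q, hq, h0⟩
    have hq' : q ∈ S := hq
    have hg : g a b q = g a b (0,0) := by rw [h0]; simp [g]
    have := g_inj a b haa hab hbb q (0,0) hg
    exact zero_not_mem_S (this ▸ hq')
  · -- ncard = 12
    rw [Set.ncard_image_of_injOn, Set.ncard_coe_finset, card_S]
    intro x _ y _ hxy
    exact g_inj a b haa hab hbb x y hxy
  · exact ⟨(1,0), by decide, by simp [g]⟩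
  · exact ⟨(0,1), by decide, by simp [g]⟩
  · rw [← real_inner_self_eq_norm_sq, ← real_inner_self_eq_norm_sq, haa, hbb]; norm_num
  · rw [haa, hab]; norm_num
  · rw [hbb, hab]; norm_num
  · -- closure under reflections
    rintro x ⟨q1, hq1, rfl⟩ y ⟨q2, hq2, rfl⟩
    have hq1S : q1 ∈ S := hq1
    have hq2S : q2 ∈ S := hq2
    obtain ⟨hteq, hmem⟩ := closure_dec q1 hq1S q2 hq2S
    have hipne : (ip q1 q1 : ℝ) ≠ 0 := Int.cast_ne_zero.mpr (ip_ne q1 hq1S)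
    have hcast : (td q1 q2 : ℝ) * (ip q1 q1 : ℝ) = 2 * (ip q2 q1 : ℝ) := by exact_mod_cast hteq
    have hscal : 2 * ⟪g a b q2, g a b q1⟫ / ⟪g a b q1, g a b q1⟫ = (td q1 q2 : ℝ) := by
      rw [inner_g a b haa hab hbb, inner_g a b haa hab hbb]
      rw [div_eq_iff (div_ne_zero hipne (by norm_num))]
      · linarith
    rw [hscal]
    refine ⟨(q2.1 - td q1 q2 * q1.1, q2.2 - td q1 q2 * q1.2), hmem, ?_⟩
    simp only [g]
    push_cast
    module
  · -- coefficients
    rintro x ⟨q, hq, rfl⟩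
    exact ⟨q.1, q.2, sign_dec q hq, rfl⟩
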